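/- arXiv:1211.6579 — 2 statements merged into one kernel-verified Lean document; each statement's English description precedes it below -/
import Mathlib

section
/- Let (M, d) be a metric space and G a group acting on M by isometries with compact orbits, and let d̃ be the induced metric on M/G given by d̃(Gx, Gy) = inf { d(x, gy) : g ∈ G }. Then (M/G, d̃) is complete if and only if (M, d) is complete. -/
/-- If a group `G` acts by isometries on a metric space `(M, d)` with
compact orbits and `d̃(Gx,Gy) = inf { d(x, gy) : g ∈ G }` is the induced metric on `M/G`,
then `(M/G, d̃)` is complete if and only if `(M, d)` is complete. -/
theorem quotient_complete_iff_complete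
    (G : Type*) [Group G] (M : Type*) [MetricSpace M] [MulAction G M]
    (hiso : ∀ (g : G) (x y : M), dist (g • x) (g • y) = dist x y)
    (hcpt : ∀ x : M, IsCompact (MulAction.orbit G x)) :
    ∀ m : MetricSpace (Quotient (MulAction.orbitRel G M)),
      (∀ x y : M,
        @dist _ m.toDist (Quotient.mk (MulAction.orbitRel G M) x)
            (Quotient.mk (MulAction.orbitRel G M) y)
          = sInf { r : ℝ | ∃ g : G, r = dist x (g • y) }) →
      (@CompleteSpace _ m.toUniformSpace ↔ CompleteSpace M) := by
  intro m hd
  letI : MetricSpace (Quotient (MulAction.orbitRel G M)) := m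
  set π : M → Quotient (MulAction.orbitRel G M) :=
    Quotient.mk (MulAction.orbitRel G M) with hπ
  -- the quotient distance is a lower bound of the orbit distances
  have hle : ∀ (x y : M) (g : G), dist (π x) (π y) ≤ dist x (g • y) := by
    intro x y g
    rw [hd]
    refine csInf_le ⟨0, ?_⟩ ⟨g, rfl⟩
    rintro r ⟨g', rfl⟩; exact dist_nonneg
  have hle1 : ∀ x y : M, dist (π x) (π y) ≤ dist x y := by
    intro x y; simpa using hle x y 1
  -- the inf is attained (compact orbits)
  have hexists : ∀ x y : M, ∃ g : G, dist (π x) (π y) = dist x (g • y) := by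
    intro x y
    have hS : {r : ℝ | ∃ g : G, r = dist x (g • y)}
        = (fun z => dist x z) '' (MulAction.orbit G y) := by
      ext r
      constructor
      · rintro ⟨g, rfl⟩; exact ⟨g • y, ⟨g, rfl⟩, rfl⟩
      · rintro ⟨z, ⟨g, rfl⟩, rfl⟩; exact ⟨g, rfl⟩
    have hc : IsCompact ((fun z => dist x z) '' (MulAction.orbit G y)) :=
      (hcpt y).image (Continuous.dist continuous_const continuous_id)
    have hne : ((fun z => dist x z) '' (MulAction.orbit G y)).Nonempty :=
      ⟨dist x y, y, MulAction.mem_orbit_self y, rfl⟩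
    have hmem := hc.sInf_mem hne
    rw [hd, hS]
    obtain ⟨z, ⟨g, rfl⟩, hz⟩ := hmem
    exact ⟨g, hz.symm⟩
  constructor
  · -- quotient complete → M complete
    intro hQ
    apply Metric.complete_of_cauchySeq_tendsto
    intro u hu
    have huQ : CauchySeq (π ∘ u) := by
      rw [Metric.cauchySeq_iff] at hu ⊢
      intro ε hε
      obtain ⟨N, hN⟩ := hu ε hε
      exact ⟨N, fun a ha b hb =>
        lt_of_le_of_lt (hle1 (u a) (u b)) (hN a ha b hb)⟩
    obtain ⟨q, hq⟩ := cauchySeq_tendsto_of_complete huQ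
    obtain ⟨y, rfl⟩ := Quotient.exists_rep q
    choose g hg using fun n => hexists (u n) y
    have hmem : ∀ n, g n • y ∈ MulAction.orbit G y := fun n => ⟨g n, rfl⟩
    obtain ⟨z, hz, φ, hφ, hφt⟩ := (hcpt y).tendsto_subseq hmem
    refine ⟨z, tendsto_nhds_of_cauchySeq_of_subseq hu hφ.tendsto_atTop ?_⟩
    have h1 : Filter.Tendsto (fun n => dist (u (φ n)) (g (φ n) • y))
        Filter.atTop (nhds 0) := by
      have h0 : Filter.Tendsto (fun n => dist (π (u n)) (π y))
          Filter.atTop (nhds 0) := tendsto_iff_dist_tendsto_zero.1 hq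
      have := h0.comp hφ.tendsto_atTop
      simpa [Function.comp_def, hg] using this
    have h2 : Filter.Tendsto (fun n => dist (g (φ n) • y) z)
        Filter.atTop (nhds 0) := tendsto_iff_dist_tendsto_zero.1 hφt
    rw [tendsto_iff_dist_tendsto_zero]
    refine squeeze_zero (fun n => dist_nonneg)
      (fun n => dist_triangle (u (φ n)) (g (φ n) • y) z) ?_
    simpa using h1.add h2
  · -- M complete → quotient complete
    intro hM
    apply Metric.complete_of_convergent_controlled_sequences
      (fun n => (1/2 : ℝ)^n) (fun n => by positivity)
    intro u hu
    -- lift: for any x and any class q, there is a representative y of q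
    -- with dist x y = dist (π x) q
    have hlift : ∀ (x : M) (q : Quotient (MulAction.orbitRel G M)),
        ∃ y : M, π y = q ∧ dist x y = dist (π x) q := by
      intro x q
      obtain ⟨w, rfl⟩ := Quotient.exists_rep q
      obtain ⟨g, hg⟩ := hexists x w
      exact ⟨g • w, Quotient.sound (MulAction.mem_orbit w g), hg.symm⟩
    choose f hf1 hf2 using hlift
    let v : ℕ → M := fun n => Nat.rec (Quotient.out (u 0))
      (fun k vk => f vk (u (k+1))) n
    have hv : ∀ n, π (v n) = u n := by
      intro n
      induction n with
      | zero => exact Quotient.out_eq _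
      | succ k _ => exact hf1 _ _
    have hvd : ∀ n, dist (v n) (v (n+1)) ≤ 1 * (1/2 : ℝ)^n := by
      intro n
      have : dist (v n) (v (n+1)) = dist (π (v n)) (u (n+1)) := hf2 _ _
      rw [this, hv n, one_mul]
      exact le_of_lt (hu n n (n+1) le_rfl (Nat.le_succ n))
    have hvc : CauchySeq v :=
      cauchySeq_of_le_geometric (1/2) 1 (by norm_num) hvd
    obtain ⟨x, hx⟩ := cauchySeq_tendsto_of_complete hvc
    refine ⟨π x, ?_⟩
    rw [tendsto_iff_dist_tendsto_zero]
    have hxd : Filter.Tendsto (fun n => dist (v n) x) Filter.atTop (nhds 0) :=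
      tendsto_iff_dist_tendsto_zero.1 hx
    refine squeeze_zero (fun n => dist_nonneg) (fun n => ?_) hxd
    calc dist (u n) (π x) = dist (π (v n)) (π x) := by rw [hv n]
      _ ≤ dist (v n) x := hle1 _ _
end

section
/- Let X be a locally compact length space. Then the metric on X is complete if and only if every closed metric ball in X is compact. -/
/-- A metric space is a length space if the distance between any two points is the
infimum of the lengths (total variations) of continuous paths joining them. -/
def IsLengthSpace (X : Type*) [MetricSpace X] : Prop :=
  ∀ x y : X,
    ENNReal.ofReal (dist x y) =
      ⨅ γ : Path x y, eVariationOn (fun t : unitInterval => γ t) Set.univ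

open Metric Set
lemma unitInterval_univ_eq : (Set.univ : Set unitInterval) = Set.Icc 0 1 := by
  ext t; simp only [mem_univ, mem_Icc, true_iff, ← Subtype.coe_le_coe]
  exact ⟨t.2.1, t.2.2⟩

/-- Key approximation lemma in a length space. -/
lemma key_approx {X : Type*} [MetricSpace X] (h : IsLengthSpace X) (x y : X)
    {r ε : ℝ} (hr : 0 ≤ r) (hrd : r ≤ dist x y) (hε : 0 < ε) :
    ∃ z : X, dist x z ≤ r ∧ dist z y ≤ dist x y - r + ε := by
  set d := dist x y with hd
  have hlt : ENNReal.ofReal d < ENNReal.ofReal (d + ε) := by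
    apply ENNReal.ofReal_lt_ofReal_iff_of_nonneg dist_nonneg |>.2
    linarith
  rw [h x y] at hlt
  obtain ⟨γ, hγ⟩ := iInf_lt_iff.1 hlt
  set f : unitInterval → X := fun t => γ t with hf
  -- IVT to find t with dist x (γ t) = r
  have hcont : Continuous fun t : unitInterval => dist x (γ t) :=
    continuous_const.dist γ.continuous
  have h0 : dist x (γ 0) = 0 := by simp [γ.source]
  have h1 : dist x (γ 1) = d := by simp [γ.target, hd]
  obtain ⟨t, ht⟩ : ∃ t : unitInterval, dist x (γ t) = r := by
    have := intermediate_value_univ (0 : unitInterval) 1 hcont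
    exact this ⟨h0 ▸ hr, h1 ▸ hrd⟩
  refine ⟨γ t, le_of_eq ht, ?_⟩
  have ht0 : (0 : unitInterval) ≤ t := t.2.1
  have ht1 : t ≤ 1 := t.2.2
  have hsplit : eVariationOn f (Icc 0 t) + eVariationOn f (Icc t 1)
      = eVariationOn f Set.univ := by
    have := eVariationOn.Icc_add_Icc f (s := Set.univ) ht0 ht1 (mem_univ t)
    simpa only [Set.univ_inter, ← unitInterval_univ_eq] using this
  have hA : ENNReal.ofReal r ≤ eVariationOn f (Icc 0 t) := by
    have := eVariationOn.edist_le f (x := (0 : unitInterval)) (y := t)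
      (Set.mem_Icc.2 ⟨le_refl _, ht0⟩) (Set.mem_Icc.2 ⟨ht0, le_refl _⟩)
    calc ENNReal.ofReal r = edist (f 0) (f t) := by
          rw [edist_dist]; congr 1
          simpa [hf, γ.source, dist_comm] using ht.symm
      _ ≤ _ := this
  have hB : edist (γ t) y ≤ eVariationOn f (Icc t 1) := by
    have := eVariationOn.edist_le f (x := t) (y := (1 : unitInterval))
      (Set.mem_Icc.2 ⟨le_refl _, ht1⟩) (Set.mem_Icc.2 ⟨ht1, le_refl _⟩)
    simpa [hf, γ.target] using this
  have hsum : ENNReal.ofReal r + edist (γ t) y ≤ ENNReal.ofReal (d + ε) := by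
    calc ENNReal.ofReal r + edist (γ t) y
        ≤ eVariationOn f (Icc 0 t) + eVariationOn f (Icc t 1) := add_le_add hA hB
      _ = eVariationOn f Set.univ := hsplit
      _ ≤ ENNReal.ofReal (d + ε) := hγ.le
  rw [edist_dist, ← ENNReal.ofReal_add hr dist_nonneg] at hsum
  have := (ENNReal.ofReal_le_ofReal_iff (by positivity)).1 hsum
  linarith


/-- (Hopf–Rinow–Cohn-Vossen) A locally compact length space is complete
if and only if every closed metric ball is compact. -/
theorem lengthSpace_complete_iff_closedBall_compact
    (X : Type*) [MetricSpace X] [LocallyCompactSpace X]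
    (h : IsLengthSpace X) :
    CompleteSpace X ↔ ∀ (x : X) (r : ℝ), IsCompact (Metric.closedBall x r) := by
  constructor
  · intro hc x r
    -- local compactness gives a positive compact ball around every point
    have loc : ∀ y : X, ∃ ε > 0, IsCompact (closedBall y ε) := by
      intro y
      obtain ⟨K, hKc, hK⟩ := exists_compact_mem_nhds y
      obtain ⟨ε, hε, hball⟩ := Metric.nhds_basis_closedBall.mem_iff.1 hK
      exact ⟨ε, hε, hKc.of_isClosed_subset isClosed_closedBall hball⟩
    set S : Set ℝ := {r | IsCompact (closedBall x r)} with hS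
    have down : ∀ s ∈ S, ∀ s' ≤ s, s' ∈ S := fun s hs s' hs' =>
      hs.of_isClosed_subset isClosed_closedBall (closedBall_subset_closedBall hs')
    by_contra hr
    have hbdd : ∀ s ∈ S, s ≤ r := by
      intro s hs
      by_contra hsr
      exact hr (down s hs r (le_of_not_ge hsr))
    obtain ⟨ε₀, hε₀, hε₀c⟩ := loc x
    have hε₀S : ε₀ ∈ S := hε₀c
    have hne : S.Nonempty := ⟨ε₀, hε₀S⟩
    have hbdd' : BddAbove S := ⟨r, fun s hs => hbdd s hs⟩
    set R := sSup S with hR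
    have hRpos : 0 < R := lt_of_lt_of_le hε₀ (le_csSup hbdd' hε₀S)
    have hlt_mem : ∀ s < R, s ∈ S := by
      intro s hs
      obtain ⟨a, haS, has⟩ := exists_lt_of_lt_csSup hne hs
      exact down a haS s has.le
    -- helper: points of slightly bigger balls are 2δ-close to the ball of radius ρ
    have approx : ∀ ρ δ : ℝ, 0 ≤ ρ → 0 < δ → ∀ w : X, dist x w ≤ ρ + δ →
        ∃ z : X, dist x z ≤ ρ ∧ dist z w ≤ 2 * δ := by
      intro ρ δ hρ hδ w hw
      rcases le_or_gt (dist x w) ρ with hc' | hc'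
      · exact ⟨w, hc', by rw [dist_self]; positivity⟩
      · obtain ⟨z, hz1, hz2⟩ := key_approx h x w hρ hc'.le hδ
        exact ⟨z, hz1, by linarith⟩
    -- Step A : closedBall x R is compact
    have hRS : R ∈ S := by
      have : IsCompact (closedBall x R) := by
        apply TotallyBounded.isCompact_of_isClosed _ isClosed_closedBall
        rw [Metric.totallyBounded_iff]
        intro ε hε
        set δ := min ε R / 4 with hδdef
        have hδ : 0 < δ := by positivity
        have hδR : δ < R := by
          have : min ε R ≤ R := min_le_right _ _
          simp only [hδdef]; linarith
        have hr'S : R - δ ∈ S := hlt_mem _ (by linarith)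
        obtain ⟨F, hF, hFsub⟩ := (Metric.totallyBounded_iff.1 hr'S.totallyBounded) δ hδ
        refine ⟨F, hF, fun w hw => ?_⟩
        have hw' : dist x w ≤ (R - δ) + 2 * δ := by
          have := mem_closedBall.1 hw; rw [dist_comm] at this; linarith
        obtain ⟨z, hz1, hz2⟩ : ∃ z : X, dist x z ≤ R - δ ∧ dist z w ≤ 2 * δ := by
          rcases le_or_gt (dist x w) (R - δ) with hc' | hc'
          · exact ⟨w, hc', by rw [dist_self]; positivity⟩
          · obtain ⟨z, hz1, hz2⟩ := key_approx h x w (by linarith) hc'.le hδ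
            refine ⟨z, hz1, ?_⟩
            have : dist x w ≤ R := by have := mem_closedBall.1 hw; rwa [dist_comm] at this
            linarith
        have hzF := hFsub (mem_closedBall.2 (by rwa [dist_comm]))
        simp only [mem_iUnion, exists_prop] at hzF ⊢
        obtain ⟨y, hyF, hzy⟩ := hzF
        refine ⟨y, hyF, ?_⟩
        rw [mem_ball] at hzy ⊢
        have hdyw : dist w y ≤ dist w z + dist z y := dist_triangle _ _ _
        have h3 : 3 * δ < ε := by
          have h1 : min ε R ≤ ε := min_le_left _ _
          have h2 : 0 < min ε R := lt_min hε hRpos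
          simp only [hδdef]; linarith
        have c0 : dist w z = dist z w := dist_comm _ _
        linarith
      exact this
    -- Step B : extend past R
    choose e he hec using loc
    have hcover : closedBall x R ⊆ ⋃ y : X, ball y (e y / 2) := fun z _ =>
      mem_iUnion.2 ⟨z, mem_ball.2 (by simpa using by linarith [he z])⟩
    obtain ⟨F, hFsub⟩ := hRS.elim_finite_subcover (fun y => ball y (e y / 2))
      (fun y => isOpen_ball) hcover
    have hxF : x ∈ closedBall x R := mem_closedBall_self hRpos.le
    have hFne : F.Nonempty := by
      have := hFsub hxF
      simp only [mem_iUnion, exists_prop] at this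
      obtain ⟨y, hy, -⟩ := this
      exact ⟨y, hy⟩
    set δm := F.inf' hFne e with hδm
    have hδmpos : 0 < δm := by
      rw [hδm, Finset.lt_inf'_iff]
      exact fun y _ => he y
    set δ := δm / 4 with hδdef
    have hδ : 0 < δ := by positivity
    have hsub : closedBall x (R + δ) ⊆ ⋃ y ∈ F, closedBall y (e y) := by
      intro w hw
      have hw' : dist x w ≤ R + δ := by
        have := mem_closedBall.1 hw; rwa [dist_comm] at this
      obtain ⟨z, hz1, hz2⟩ := approx R δ hRpos.le hδ w hw'
      have hzF := hFsub (mem_closedBall.2 (by rwa [dist_comm]))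
      simp only [mem_iUnion, exists_prop] at hzF ⊢
      obtain ⟨y, hyF, hzy⟩ := hzF
      refine ⟨y, hyF, ?_⟩
      rw [mem_ball] at hzy
      rw [mem_closedBall]
      have hy_e : δm ≤ e y := Finset.inf'_le _ hyF
      have htri : dist w y ≤ dist w z + dist z y := dist_triangle _ _ _
      have c0 : dist w z = dist z w := dist_comm _ _
      have h2δ : 2 * δ ≤ e y / 2 := by
        simp only [hδdef]; linarith
      linarith
    have hcomp : IsCompact (⋃ y ∈ F, closedBall y (e y)) :=
      F.finite_toSet.isCompact_biUnion (fun y _ => hec y)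
    have hRδS : R + δ ∈ S := hcomp.of_isClosed_subset isClosed_closedBall hsub
    have : R + δ ≤ R := le_csSup hbdd' hRδS
    linarith
  · intro H
    haveI : ProperSpace X := ⟨H⟩
    infer_instance
end
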